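/- Rounding algorithm guarantee (Altschuler–Niles-Weed–Rigollet): given a nonnegative matrix γ ∈ ℝ₊^{m×n} with entries summing to 1, and probability vectors μ ∈ Δ_m, ν ∈ Δ_n with positive entries, the rounded matrix R(γ) produced by the two-step capped scaling followed by a rank-one correction satisfies R(γ) ∈ T(μ,ν) and ‖R(γ) − γ‖₁ ≤ 2(‖γ1_n − μ‖₁ + ‖γᵀ1_m − ν‖₁). -/

import Mathlib

noncomputable def l1 {m n : ℕ} (A : Matrix (Fin m) (Fin n) ℝ) : ℝ :=
  ∑ i, ∑ j, |A i j|

noncomputable def l1v {m : ℕ} (x : Fin m → ℝ) : ℝ := ∑ i, |x i|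

def rowSum {m n : ℕ} (A : Matrix (Fin m) (Fin n) ℝ) (i : Fin m) : ℝ := ∑ j, A i j

def colSum {m n : ℕ} (A : Matrix (Fin m) (Fin n) ℝ) (j : Fin n) : ℝ := ∑ i, A i j

/-- The rounding algorithm of Altschuler–Niles-Weed–Rigollet: cap and rescale rows so row
sums do not exceed `μ`, then columns so column sums do not exceed `ν`, then add a rank-one
correction to restore the marginals exactly. -/
noncomputable def roundMat {m n : ℕ} (μ : Fin m → ℝ) (ν : Fin n → ℝ)
    (γ : Matrix (Fin m) (Fin n) ℝ) : Matrix (Fin m) (Fin n) ℝ :=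
  let γ' : Matrix (Fin m) (Fin n) ℝ := fun i j => min (μ i / rowSum γ i) 1 * γ i j
  let γ'' : Matrix (Fin m) (Fin n) ℝ := fun i j => γ' i j * min (ν j / colSum γ' j) 1
  let er : Fin m → ℝ := fun i => μ i - rowSum γ'' i
  let ec : Fin n → ℝ := fun j => ν j - colSum γ'' j
  fun i j => γ'' i j + er i * ec j / l1v er

/-- Rounding guarantee: for a nonnegative matrix `γ` with entries summing to 1 and positive
probability vectors `μ, ν`, the rounded matrix lies in the transport polytope `T(μ,ν)` and
`‖R(γ) − γ‖₁ ≤ 2(‖γ1_n − μ‖₁ + ‖γᵀ1_m − ν‖₁)`. -/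
theorem roundMat_mem_and_close {m n : ℕ} (μ : Fin m → ℝ) (ν : Fin n → ℝ)
    (γ : Matrix (Fin m) (Fin n) ℝ)
    (hγ0 : ∀ i j, 0 ≤ γ i j) (hγ1 : ∑ i, ∑ j, γ i j = 1)
    (hμ0 : ∀ i, 0 < μ i) (hμ1 : ∑ i, μ i = 1)
    (hν0 : ∀ j, 0 < ν j) (hν1 : ∑ j, ν j = 1) :
    ((∀ i j, 0 ≤ roundMat μ ν γ i j) ∧ (∀ i, rowSum (roundMat μ ν γ) i = μ i) ∧
      (∀ j, colSum (roundMat μ ν γ) j = ν j)) ∧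
    l1 (roundMat μ ν γ - γ) ≤
      2 * (l1v (fun i => rowSum γ i - μ i) + l1v (fun j => colSum γ j - ν j)) := by
  classical
  set A : Matrix (Fin m) (Fin n) ℝ := fun i j => min (μ i / rowSum γ i) 1 * γ i j with hA
  set B : Matrix (Fin m) (Fin n) ℝ := fun i j => A i j * min (ν j / colSum A j) 1 with hB
  set er : Fin m → ℝ := fun i => μ i - rowSum B i with her
  set ec : Fin n → ℝ := fun j => ν j - colSum B j with hec
  have hRdef : roundMat μ ν γ = fun i j => B i j + er i * ec j / l1v er := rfl
  -- basic nonnegativity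
  have hr0 : ∀ i, 0 ≤ rowSum γ i := fun i => Finset.sum_nonneg fun j _ => hγ0 i j
  have hA0 : ∀ i j, 0 ≤ A i j := fun i j =>
    mul_nonneg (le_min (div_nonneg (hμ0 i).le (hr0 i)) zero_le_one) (hγ0 i j)
  have hcA0 : ∀ j, 0 ≤ colSum A j := fun j => Finset.sum_nonneg fun i _ => hA0 i j
  have hAle : ∀ i j, A i j ≤ γ i j := fun i j =>
    mul_le_of_le_one_left (hγ0 i j) (min_le_right _ 1)
  have hB0 : ∀ i j, 0 ≤ B i j := fun i j =>
    mul_nonneg (hA0 i j) (le_min (div_nonneg (hν0 j).le (hcA0 j)) zero_le_one)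
  have hBleA : ∀ i j, B i j ≤ A i j := fun i j =>
    mul_le_of_le_one_right (hA0 i j) (min_le_right _ 1)
  have hBle : ∀ i j, B i j ≤ γ i j := fun i j => (hBleA i j).trans (hAle i j)
  -- row sums of A
  have hrowA : ∀ i, rowSum A i = min (μ i) (rowSum γ i) := by
    intro i
    have : rowSum A i = min (μ i / rowSum γ i) 1 * rowSum γ i := by
      simp [rowSum, hA, Finset.mul_sum]
    rw [this, min_mul_of_nonneg _ _ (hr0 i)]
    by_cases h : rowSum γ i = 0
    · simp [h, min_eq_right (hμ0 i).le]
    · rw [div_mul_cancel₀ _ h, one_mul]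
  -- column sums of B
  have hcolB : ∀ j, colSum B j = min (ν j) (colSum A j) := by
    intro j
    have : colSum B j = colSum A j * min (ν j / colSum A j) 1 := by
      simp [colSum, hB, Finset.sum_mul]
    rw [this, mul_min_of_nonneg _ _ (hcA0 j)]
    by_cases h : colSum A j = 0
    · simp [h, min_eq_right (hν0 j).le]
    · rw [mul_div_cancel₀ _ h, mul_one, min_comm]
  -- er, ec nonneg
  have hrowBle : ∀ i, rowSum B i ≤ μ i := by
    intro i
    calc rowSum B i ≤ rowSum A i := Finset.sum_le_sum fun j _ => hBleA i j
    _ ≤ μ i := by rw [hrowA i]; exact min_le_left _ _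
  have her0 : ∀ i, 0 ≤ er i := fun i => sub_nonneg.2 (hrowBle i)
  have hec0 : ∀ j, 0 ≤ ec j := fun j => by
    simp only [hec, sub_nonneg, hcolB j]; exact min_le_left _ _
  -- total of B and sums of er, ec
  have hsum_rc : ∑ i, rowSum B i = ∑ j, colSum B j := by
    simp only [rowSum, colSum]; exact Finset.sum_comm
  have hsum_er : ∑ i, er i = 1 - ∑ i, rowSum B i := by
    simp [her, Finset.sum_sub_distrib, hμ1]
  have hsum_ec : ∑ j, ec j = 1 - ∑ i, rowSum B i := by
    simp [hec, Finset.sum_sub_distrib, hν1, hsum_rc]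
  have hs_eq : l1v er = ∑ i, er i := by
    simp only [l1v]; exact Finset.sum_congr rfl fun i _ => abs_of_nonneg (her0 i)
  set s : ℝ := l1v er with hs
  have hs0 : 0 ≤ s := Finset.sum_nonneg fun i _ => abs_nonneg _
  have hsec : ∑ j, ec j = s := by rw [hs_eq, hsum_er, hsum_ec]
  have hser : ∑ i, er i = s := hs_eq.symm
  -- if s = 0 then er i = 0 and ec j = 0
  have her_zero : s = 0 → ∀ i, er i = 0 := by
    intro h i
    have := (Finset.sum_eq_zero_iff_of_nonneg fun i _ => her0 i).1 (hser.trans h)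
    exact this i (Finset.mem_univ i)
  have hec_zero : s = 0 → ∀ j, ec j = 0 := by
    intro h j
    have := (Finset.sum_eq_zero_iff_of_nonneg fun j _ => hec0 j).1 (hsec.trans h)
    exact this j (Finset.mem_univ j)
  constructor
  · refine ⟨?_, ?_, ?_⟩
    · intro i j
      rw [hRdef]
      exact add_nonneg (hB0 i j) (div_nonneg (mul_nonneg (her0 i) (hec0 j)) hs0)
    · intro i
      have : rowSum (roundMat μ ν γ) i = rowSum B i + er i * s / s := by
        rw [hRdef]
        simp only [rowSum, Finset.sum_add_distrib]
        congr 1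
        rw [← Finset.sum_div, ← Finset.mul_sum, hsec]
      rw [this]
      by_cases h : s = 0
      · rw [her_zero h i]; simp [her] at *; linarith [her_zero h i]
      · rw [mul_div_cancel_right₀ _ h]; simp [her]
    · intro j
      have : colSum (roundMat μ ν γ) j = colSum B j + s * ec j / s := by
        rw [hRdef]
        simp only [colSum, Finset.sum_add_distrib]
        congr 1
        rw [← Finset.sum_div, ← Finset.sum_mul, hser]
      rw [this]
      by_cases h : s = 0
      · rw [h, zero_mul, zero_div, add_zero]
        have := hec_zero h j
        simp only [hec] at this
        linarith
      · rw [mul_div_cancel_left₀ _ h]; simp [hec]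
  · -- the distance bound
    have key1 : l1 (roundMat μ ν γ - γ) ≤ (∑ i, ∑ j, (γ i j - B i j)) + s * s / s := by
      have hterm : ∀ i j, |roundMat μ ν γ i j - γ i j| ≤
          (γ i j - B i j) + er i * ec j / s := by
        intro i j
        rw [hRdef]
        have h1 : (0:ℝ) ≤ er i * ec j / s := div_nonneg (mul_nonneg (her0 i) (hec0 j)) hs0
        calc |B i j + er i * ec j / s - γ i j|
            = |(B i j - γ i j) + er i * ec j / s| := by ring_nf
          _ ≤ |B i j - γ i j| + |er i * ec j / s| := abs_add_le _ _
          _ = (γ i j - B i j) + er i * ec j / s := by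
              rw [abs_of_nonpos (sub_nonpos.2 (hBle i j)), abs_of_nonneg h1, neg_sub]
      calc l1 (roundMat μ ν γ - γ) = ∑ i, ∑ j, |roundMat μ ν γ i j - γ i j| := by
            simp [l1, Matrix.sub_apply]
        _ ≤ ∑ i, ∑ j, ((γ i j - B i j) + er i * ec j / s) :=
            Finset.sum_le_sum fun i _ => Finset.sum_le_sum fun j _ => hterm i j
        _ = (∑ i, ∑ j, (γ i j - B i j)) + ∑ i, ∑ j, er i * ec j / s := by
            rw [← Finset.sum_add_distrib]
            exact Finset.sum_congr rfl fun i _ => Finset.sum_add_distrib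
        _ = (∑ i, ∑ j, (γ i j - B i j)) + s * s / s := by
            congr 1
            calc ∑ i, ∑ j, er i * ec j / s = ∑ i, er i * (∑ j, ec j) / s := by
                  exact Finset.sum_congr rfl fun i _ => by
                    rw [← Finset.sum_div, ← Finset.mul_sum]
              _ = s * s / s := by rw [hsec, ← Finset.sum_div, ← Finset.sum_mul, hser]
    have hBtot : (∑ i, ∑ j, (γ i j - B i j)) = s := by
      have : (∑ i, ∑ j, (γ i j - B i j)) = 1 - ∑ i, rowSum B i := by
        simp [Finset.sum_sub_distrib, hγ1, rowSum]
      rw [this, ← hsum_er, hser]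
    have hss : s * s / s ≤ s := by
      by_cases h : s = 0
      · simp [h]
      · rw [mul_div_cancel_right₀ _ h]
    -- now bound s by the marginal errors
    have hcolAle : ∀ j, colSum A j ≤ colSum γ j := fun j =>
      Finset.sum_le_sum fun i _ => hAle i j
    have hterm2 : ∀ j, ec j ≤ |colSum γ j - ν j| + (colSum γ j - colSum A j) := by
      intro j
      have h2 : 0 ≤ colSum γ j - colSum A j := sub_nonneg.2 (hcolAle j)
      have hecj : ec j = ν j - min (ν j) (colSum A j) := by
        simp only [hec]; rw [hcolB j]
      rcases le_total (ν j) (colSum A j) with h | h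
      · rw [hecj, min_eq_left h, sub_self]
        exact add_nonneg (abs_nonneg _) h2
      · rw [hecj, min_eq_right h]
        have : ν j - colSum γ j ≤ |colSum γ j - ν j| := by
          rw [abs_sub_comm]; exact le_abs_self _
        linarith
    have hsumAdiff : ∑ j, (colSum γ j - colSum A j) = ∑ i, (rowSum γ i - rowSum A i) := by
      simp only [colSum, rowSum, Finset.sum_sub_distrib]
      congr 1
      · exact Finset.sum_comm
      · exact Finset.sum_comm
    have hterm3 : ∀ i, rowSum γ i - rowSum A i ≤ |rowSum γ i - μ i| := by
      intro i
      rw [hrowA i]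
      rcases le_total (μ i) (rowSum γ i) with h | h
      · rw [min_eq_left h]; exact le_abs_self _
      · rw [min_eq_right h, sub_self]; exact abs_nonneg _
    have hsbound : s ≤ l1v (fun i => rowSum γ i - μ i) + l1v (fun j => colSum γ j - ν j) := by
      calc s = ∑ j, ec j := hsec.symm
        _ ≤ ∑ j, (|colSum γ j - ν j| + (colSum γ j - colSum A j)) :=
            Finset.sum_le_sum fun j _ => hterm2 j
        _ = (∑ j, |colSum γ j - ν j|) + ∑ j, (colSum γ j - colSum A j) :=
            Finset.sum_add_distrib
        _ ≤ (∑ j, |colSum γ j - ν j|) + ∑ i, |rowSum γ i - μ i| := by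
            rw [hsumAdiff]
            exact add_le_add_right (Finset.sum_le_sum fun i _ => hterm3 i) _
        _ = l1v (fun i => rowSum γ i - μ i) + l1v (fun j => colSum γ j - ν j) := by
            rw [add_comm]; rfl
    calc l1 (roundMat μ ν γ - γ) ≤ (∑ i, ∑ j, (γ i j - B i j)) + s * s / s := key1
      _ ≤ s + s := by rw [hBtot]; linarith
      _ = 2 * s := by ring
      _ ≤ 2 * (l1v (fun i => rowSum γ i - μ i) + l1v (fun j => colSum γ j - ν j)) := by
          linarith
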